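/- Fix n ≥ 0 and let g be the real Lie algebra with basis {X_{4k+1}, X_{4k+2}, X_{4k+3}, X_{4k+4} : 0 ≤ k ≤ n} ∪ {Z_1, Z_2} whose only nonzero brackets among basis elements are [X_{4k+1}, X_{4k+3}] = −Z_1/2, [X_{4k+1}, X_{4k+4}] = −Z_2/2, [X_{4k+2}, X_{4k+3}] = −Z_2/2, [X_{4k+2}, X_{4k+4}] = Z_1/2. In g_ℂ set W = (Z_1 + iZ_2)/2, W̄ = (Z_1 − iZ_2)/2, T_{2k+1} = (X_{4k+1} − iX_{4k+2})/2, T_{2k+2} = (X_{4k+3} + iX_{4k+4})/2, T̄_{2k+1} = (X_{4k+1} + iX_{4k+2})/2, T̄_{2k+2} = (X_{4k+3} − iX_{4k+4})/2, forming a ℂ-basis of g_ℂ. Let ρ be the functional with ρ(W) = 1 and ρ = 0 on the other basis elements, and ρ̄ the functional with ρ̄(W̄) = 1 and ρ̄ = 0 on the other basis elements. Let m = span_ℂ{T_1, …, T_{2n+2}} and n̄ = span_ℂ{T̄_1, …, T̄_{2n+2}}, and define Φ_ρ, Φ_ρ̄ : m → Hom_ℂ(n̄, ℂ) by Φ_ρ(T)(S)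 = ρ([T, S]) and Φ_ρ̄(T)(S) = ρ̄([T, S]). Then the images of Φ_ρ and Φ_ρ̄ are transversal: image(Φ_ρ) ∩ image(Φ_ρ̄) = {0}. -/

import Mathlib

/-! **Statement 14.** In the complexification of the algebra `W_{4n+6}` of Example 3,
the images of the contractions `Φ_ρ` and `Φ_ρ̄` of `dρ` and `dρ̄` are transversal. -/

namespace ExampleThreeComplex

noncomputable section

/-- The complexification `g_ℂ` of the algebra of Example 3: for each `0 ≤ k ≤ n`
the four complex coordinates of `X_{4k+1}, …, X_{4k+4}`, plus those of `Z_1, Z_2`. -/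
abbrev Gc (n : ℕ) := (Fin (n + 1) → ℂ × ℂ × ℂ × ℂ) × ℂ × ℂ

/-- The standard basis of `ℂ × ℂ × ℂ × ℂ`. -/
def e : Fin 4 → ℂ × ℂ × ℂ × ℂ := ![(1, 0, 0, 0), (0, 1, 0, 0), (0, 0, 1, 0), (0, 0, 0, 1)]

/-- The basis vector `X_{4k+1+i}` (for `i : Fin 4`). -/
def X {n : ℕ} (k : Fin (n + 1)) (i : Fin 4) : Gc n := (Pi.single k (e i), 0, 0)

/-- The basis vector `Z_1`. -/
def Z1 {n : ℕ} : Gc n := (0, 1, 0)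

/-- The basis vector `Z_2`. -/
def Z2 {n : ℕ} : Gc n := (0, 0, 1)

/-- Coefficients of `Z_1` in the brackets `[X_{4k+1+i}, X_{4k+1+j}]`. -/
def c : Matrix (Fin 4) (Fin 4) ℂ :=
  !![0, 0, -(1 / 2), 0; 0, 0, 0, 1 / 2; 1 / 2, 0, 0, 0; 0, -(1 / 2), 0, 0]

/-- Coefficients of `Z_2` in the brackets `[X_{4k+1+i}, X_{4k+1+j}]`. -/
def d : Matrix (Fin 4) (Fin 4) ℂ :=
  !![0, 0, 0, -(1 / 2); 0, 0, -(1 / 2), 0; 0, 1 / 2, 0, 0; 1 / 2, 0, 0, 0]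

/-- `W = (Z_1 + iZ_2)/2`. -/
def W {n : ℕ} : Gc n := (0, 1 / 2, Complex.I / 2)
/-- `W̄ = (Z_1 - iZ_2)/2`. -/
def Wb {n : ℕ} : Gc n := (0, 1 / 2, -(Complex.I / 2))
/-- `T_{2k+1} = (X_{4k+1} - iX_{4k+2})/2`. -/
def Todd {n : ℕ} (k : Fin (n + 1)) : Gc n :=
  (Pi.single k (1 / 2, -(Complex.I / 2), 0, 0), 0, 0)
/-- `T_{2k+2} = (X_{4k+3} + iX_{4k+4})/2`. -/
def Teven {n : ℕ} (k : Fin (n + 1)) : Gc n :=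
  (Pi.single k (0, 0, 1 / 2, Complex.I / 2), 0, 0)
/-- `T̄_{2k+1} = (X_{4k+1} + iX_{4k+2})/2`. -/
def Tbodd {n : ℕ} (k : Fin (n + 1)) : Gc n :=
  (Pi.single k (1 / 2, Complex.I / 2, 0, 0), 0, 0)
/-- `T̄_{2k+2} = (X_{4k+3} - iX_{4k+4})/2`. -/
def Tbeven {n : ℕ} (k : Fin (n + 1)) : Gc n :=
  (Pi.single k (0, 0, 1 / 2, -(Complex.I / 2)), 0, 0)

/-- The span `m` of the `(1,0)`-vectors `T_1, …, T_{2n+2}`. -/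
def M (n : ℕ) : Submodule ℂ (Gc n) :=
  Submodule.span ℂ (Set.range (Todd (n := n)) ∪ Set.range Teven)

/-- The span `n̄` of the `(0,1)`-vectors `T̄_1, …, T̄_{2n+2}`. -/
def N (n : ℕ) : Submodule ℂ (Gc n) :=
  Submodule.span ℂ (Set.range (Tbodd (n := n)) ∪ Set.range Tbeven)

/-- Let `B` be the ℂ-bilinear extension of the bracket of Example 3 to `g_ℂ`, let
`ρ` and `ρ̄` be the functionals with `ρ W = 1`, `ρ̄ W̄ = 1`, vanishing on the other
elements of the ℂ-basis `{W, W̄, T_j, T̄_j}`, and let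
`Φ_ρ, Φ_ρ̄ : m → Hom_ℂ(n̄, ℂ)` be the linear maps `Φ_ρ T = (S ↦ ρ ⁅T, S⁆)` and
`Φ_ρ̄ T = (S ↦ ρ̄ ⁅T, S⁆)`, where `m = span_ℂ {T_1, …, T_{2n+2}}` and
`n̄ = span_ℂ {T̄_1, …, T̄_{2n+2}}`.  Then the images of `Φ_ρ` and `Φ_ρ̄` are
transversal: `image Φ_ρ ⊓ image Φ_ρ̄ = ⊥`. -/
theorem images_transversal
    (n : ℕ)
    (B : Gc n →ₗ[ℂ] Gc n →ₗ[ℂ] Gc n)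
    (hXX : ∀ (k l : Fin (n + 1)) (i j : Fin 4),
      B (X k i) (X l j) = if k = l then c i j • Z1 + d i j • Z2 else 0)
    (hZ1 : ∀ (k : Fin (n + 1)) (i : Fin 4), B (X k i) Z1 = 0 ∧ B Z1 (X k i) = 0)
    (hZ2 : ∀ (k : Fin (n + 1)) (i : Fin 4), B (X k i) Z2 = 0 ∧ B Z2 (X k i) = 0)
    (hZZ : B (Z1 : Gc n) Z1 = 0 ∧ B (Z1 : Gc n) Z2 = 0 ∧ B (Z2 : Gc n) Z1 = 0 ∧
      B (Z2 : Gc n) Z2 = 0)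
    (ρ : Gc n →ₗ[ℂ] ℂ)
    (hρW : ρ W = 1) (hρWb : ρ Wb = 0)
    (hρT : ∀ k, ρ (Todd k) = 0 ∧ ρ (Teven k) = 0 ∧ ρ (Tbodd k) = 0 ∧ ρ (Tbeven k) = 0)
    (ρb : Gc n →ₗ[ℂ] ℂ)
    (hρbWb : ρb Wb = 1) (hρbW : ρb W = 0)
    (hρbT : ∀ k, ρb (Todd k) = 0 ∧ ρb (Teven k) = 0 ∧ ρb (Tbodd k) = 0 ∧
      ρb (Tbeven k) = 0)
    (Φρ Φρb : M n →ₗ[ℂ] (N n →ₗ[ℂ] ℂ))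
    (hΦρ : ∀ (u : M n) (v : N n), Φρ u v = ρ (B (u : Gc n) (v : Gc n)))
    (hΦρb : ∀ (u : M n) (v : N n), Φρb u v = ρb (B (u : Gc n) (v : Gc n))) :
    LinearMap.range Φρ ⊓ LinearMap.range Φρb = ⊥ := by
  classical
  -- decompositions of the T's in terms of the X basis
  have hTodd : ∀ k : Fin (n + 1),
      Todd k = (1/2 : ℂ) • X k 0 + (-(Complex.I/2)) • X k 1 := by
    intro k
    simp only [Todd, X, e, Prod.smul_mk, Prod.mk_add_mk, smul_zero, add_zero,
      ← Pi.single_smul, ← Pi.single_add]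
    norm_num [Prod.ext_iff]
  have hTeven : ∀ k : Fin (n + 1),
      Teven k = (1/2 : ℂ) • X k 2 + (Complex.I/2) • X k 3 := by
    intro k
    simp only [Teven, X, e, Prod.smul_mk, Prod.mk_add_mk, smul_zero, add_zero,
      ← Pi.single_smul, ← Pi.single_add]
    norm_num [Prod.ext_iff, Matrix.cons_val_two, Matrix.cons_val_three, Matrix.vecHead, Matrix.vecTail]
  have hTbodd : ∀ k : Fin (n + 1),
      Tbodd k = (1/2 : ℂ) • X k 0 + (Complex.I/2) • X k 1 := by
    intro k
    simp only [Tbodd, X, e, Prod.smul_mk, Prod.mk_add_mk, smul_zero, add_zero,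
      ← Pi.single_smul, ← Pi.single_add]
    norm_num [Prod.ext_iff]
  have hTbeven : ∀ k : Fin (n + 1),
      Tbeven k = (1/2 : ℂ) • X k 2 + (-(Complex.I/2)) • X k 3 := by
    intro k
    simp only [Tbeven, X, e, Prod.smul_mk, Prod.mk_add_mk, smul_zero, add_zero,
      ← Pi.single_smul, ← Pi.single_add]
    norm_num [Prod.ext_iff, Matrix.cons_val_two, Matrix.cons_val_three, Matrix.vecHead, Matrix.vecTail]
  -- values of ρ and ρb on Z1, Z2
  have hZ1eq : (Z1 : Gc n) = W + Wb := by
    simp [Z1, W, Wb, Prod.ext_iff]; ring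
  have hZ2eq : (Z2 : Gc n) = (-Complex.I) • W + Complex.I • Wb := by
    simp [Z2, W, Wb, Prod.ext_iff, Complex.ext_iff]; norm_num
  have hρZ1 : ρ (Z1 : Gc n) = 1 := by rw [hZ1eq, map_add, hρW, hρWb]; ring
  have hρZ2 : ρ (Z2 : Gc n) = -Complex.I := by
    rw [hZ2eq, map_add, map_smul, map_smul, hρW, hρWb]; simp
  have hρbZ1 : ρb (Z1 : Gc n) = 1 := by rw [hZ1eq, map_add, hρbWb, hρbW]; ring
  have hρbZ2 : ρb (Z2 : Gc n) = Complex.I := by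
    rw [hZ2eq, map_add, map_smul, map_smul, hρbWb, hρbW]; simp
  -- key bracket computations
  have expand : ∀ (a b a' b' : ℂ) (i j i' j' : Fin 4) (k l : Fin (n + 1))
      (σ : Gc n →ₗ[ℂ] ℂ),
      σ (B (a • X k i + b • X k j) (a' • X l i' + b' • X l j')) =
      (if k = l then (1 : ℂ) else 0) *
        (a * a' * (c i i' * σ Z1 + d i i' * σ Z2) +
         a * b' * (c i j' * σ Z1 + d i j' * σ Z2) +
         b * a' * (c j i' * σ Z1 + d j i' * σ Z2) +
         b * b' * (c j j' * σ Z1 + d j j' * σ Z2)) := by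
    intro a b a' b' i j i' j' k l σ
    simp only [map_add, map_smul, LinearMap.add_apply, LinearMap.smul_apply, hXX]
    by_cases h : k = l <;>
      simp only [h, if_true, if_false, smul_add, smul_smul, smul_eq_mul, map_add,
        map_smul, smul_zero, map_zero, add_zero, zero_mul, one_mul] <;> ring
  have entries :
      c 0 2 = -(1/2) ∧ c 0 3 = 0 ∧ c 1 2 = 0 ∧ c 1 3 = 1/2 ∧
      c 2 2 = 0 ∧ c 2 3 = 0 ∧ c 3 2 = 0 ∧ c 3 3 = 0 ∧
      c 0 0 = 0 ∧ c 0 1 = 0 ∧ c 1 0 = 0 ∧ c 1 1 = 0 ∧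
      c 2 0 = 1/2 ∧ c 2 1 = 0 ∧ c 3 0 = 0 ∧ c 3 1 = -(1/2) ∧
      d 0 2 = 0 ∧ d 0 3 = -(1/2) ∧ d 1 2 = -(1/2) ∧ d 1 3 = 0 ∧
      d 2 2 = 0 ∧ d 2 3 = 0 ∧ d 3 2 = 0 ∧ d 3 3 = 0 ∧
      d 0 0 = 0 ∧ d 0 1 = 0 ∧ d 1 0 = 0 ∧ d 1 1 = 0 ∧
      d 2 0 = 0 ∧ d 2 1 = 1/2 ∧ d 3 0 = 1/2 ∧ d 3 1 = 0 := by
    norm_num [c, d, Matrix.cons_val_zero, Matrix.cons_val_one, Matrix.head_cons,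
      Matrix.cons_val', Matrix.empty_val', Matrix.cons_val_fin_one,
      Matrix.head_fin_const, Matrix.vecHead, Matrix.vecTail, Matrix.cons_val_two, Matrix.cons_val_three]
  obtain ⟨e1, e2, e3, e4, e5, e6, e7, e8, e9, e10, e11, e12, e13, e14, e15, e16,
    f1, f2, f3, f4, f5, f6, f7, f8, f9, f10, f11, f12, f13, f14, f15, f16⟩ := entries
  have key : ∀ k l : Fin (n + 1),
      ρ (B (Todd k) (Tbeven l)) = 0 ∧ ρ (B (Teven k) (Tbeven l)) = 0 ∧
      ρb (B (Todd k) (Tbodd l)) = 0 ∧ ρb (B (Teven k) (Tbodd l)) = 0 := by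
    intro k l
    rw [hTodd, hTeven, hTbodd, hTbeven]
    refine ⟨?_, ?_, ?_, ?_⟩ <;>
      rw [expand] <;>
      simp only [e1, e2, e3, e4, e5, e6, e7, e8, e9, e10, e11, e12, e13, e14, e15,
        e16, f1, f2, f3, f4, f5, f6, f7, f8, f9, f10, f11, f12, f13, f14, f15, f16,
        hρZ1, hρZ2, hρbZ1, hρbZ2] <;>
      by_cases h : k = l <;>
      simp only [h, if_true, if_false, zero_mul] <;>
      ring_nf <;>
      simp [Complex.ext_iff] <;> ring
  -- vanishing of the relevant functionals on all of M
  have hA : ∀ (l : Fin (n + 1)) (u : Gc n), u ∈ M n → ρ (B u (Tbeven l)) = 0 := by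
    intro l
    have hle : M n ≤ LinearMap.ker (ρ ∘ₗ B.flip (Tbeven l)) := by
      rw [M, Submodule.span_le]
      rintro _ (⟨k, rfl⟩ | ⟨k, rfl⟩) <;>
        simp [LinearMap.mem_ker, (key k l).1, (key k l).2.1]
    intro u hu
    exact hle hu
  have hB : ∀ (l : Fin (n + 1)) (u : Gc n), u ∈ M n → ρb (B u (Tbodd l)) = 0 := by
    intro l
    have hle : M n ≤ LinearMap.ker (ρb ∘ₗ B.flip (Tbodd l)) := by
      rw [M, Submodule.span_le]
      rintro _ (⟨k, rfl⟩ | ⟨k, rfl⟩) <;>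
        simp [LinearMap.mem_ker, (key k l).2.2.1, (key k l).2.2.2]
    intro u hu
    exact hle hu
  -- main argument
  rw [eq_bot_iff]
  rintro φ ⟨⟨u, rfl⟩, u', hu'⟩
  rw [Submodule.mem_bot]
  ext ⟨v, hv⟩
  show Φρ u ⟨v, hv⟩ = 0
  refine Submodule.span_induction (p := fun x hx => Φρ u ⟨x, hx⟩ = 0) ?_ ?_ ?_ ?_ hv
  · rintro _ (⟨l, rfl⟩ | ⟨l, rfl⟩)
    · -- Tbodd l : use the Φρb representation
      rw [← hu', hΦρb]
      exact hB l u' u'.2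
    · rw [hΦρ]
      exact hA l u u.2
  · simp only [show (⟨0, Submodule.zero_mem _⟩ : N n) = 0 from rfl, map_zero]
  · intro x y hx hy px py
    have hxy : (⟨x + y, Submodule.add_mem _ hx hy⟩ : N n) =
        ⟨x, hx⟩ + ⟨y, hy⟩ := rfl
    rw [hxy, map_add, px, py, add_zero]
  · intro a x hx px
    have hax : (⟨a • x, Submodule.smul_mem _ a hx⟩ : N n) = a • ⟨x, hx⟩ := rfl
    rw [hax, map_smul, px, smul_zero]

end

end ExampleThreeComplex
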